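/- Let n ≥ 2 even and let φ(z) = z·ψ(z^n) commute with τ_n(z) = e^{πi/n}/conj(z). Writing ψ(z) = (Σ_{k=0}^r a_k z^k)/(Σ_{k=0}^r b_k z^k) with the numerator and denominator coprime and max degree r, then r is even and there exist λ ∈ ℂ with |λ| = 1 such that b_k = conj(λ)·(-1)^k·conj(a_{r-k}) for all k. -/

import Mathlib

open OnePoint Complex Polynomial

/-- The Möbius transformation determined by the matrix `[[a,b],[c,d]]`,
acting on the Riemann sphere `OnePoint ℂ`. -/
noncomputable def moeb (a b c d : ℂ) (p : OnePoint ℂ) : OnePoint ℂ :=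
  OnePoint.elim p (if c = 0 then ∞ else ((a / c : ℂ) : OnePoint ℂ))
    (fun z => if c * z + d = 0 then ∞ else (((a * z + b) / (c * z + d) : ℂ) : OnePoint ℂ))

/-- Complex conjugation extended to the Riemann sphere. -/
noncomputable def sphConj (p : OnePoint ℂ) : OnePoint ℂ :=
  OnePoint.elim p ∞ (fun z => ((starRingEnd ℂ) z : OnePoint ℂ))

/-- The imaginary reflection `τ(z) = -1/conj z` on the Riemann sphere. -/
noncomputable def tauSph (p : OnePoint ℂ) : OnePoint ℂ :=
  moeb 0 (-1) 1 0 (sphConj p)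

/-- The rational map on the Riemann sphere determined by a quotient `P/Q`
of (coprime) polynomials. -/
noncomputable def ratMap (P Q : Polynomial ℂ) (p : OnePoint ℂ) : OnePoint ℂ :=
  OnePoint.elim p
    (if Q.degree < P.degree then ∞
     else ((P.coeff Q.natDegree / Q.leadingCoeff : ℂ) : OnePoint ℂ))
    (fun z => if Q.eval z = 0 then ∞ else ((P.eval z / Q.eval z : ℂ) : OnePoint ℂ))

lemma sphConj_coe' (z : ℂ) : sphConj (z : OnePoint ℂ) = ((starRingEnd ℂ) z : OnePoint ℂ) := rfl

lemma moeb_coe' (a z : ℂ) (hz : z ≠ 0) :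
    moeb 0 a 1 0 (z : OnePoint ℂ) = ((a / z : ℂ) : OnePoint ℂ) := by
  show (if 1 * z + 0 = 0 then (∞ : OnePoint ℂ) else (((0 * z + a) / (1 * z + 0) : ℂ) : OnePoint ℂ)) = _
  rw [if_neg (by simpa using hz)]
  norm_num

lemma ratMap_coe' (P Q : Polynomial ℂ) (z : ℂ) :
    ratMap P Q (z : OnePoint ℂ)
      = if Q.eval z = 0 then ∞ else (((P.eval z / Q.eval z : ℂ)) : OnePoint ℂ) := rfl


noncomputable def starP (r : ℕ) (P : Polynomial ℂ) : Polynomial ℂ :=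
  ∑ j ∈ Finset.range (r+1), C ((-1)^j * P.coeff (r-j)) * X^j

lemma starP_coeff (r : ℕ) (P : Polynomial ℂ) (k : ℕ) :
    (starP r P).coeff k = if k ≤ r then (-1)^k * P.coeff (r-k) else 0 := by
  unfold starP
  rw [Polynomial.finset_sum_coeff]
  simp only [Polynomial.coeff_C_mul, Polynomial.coeff_X_pow, mul_ite, mul_one, mul_zero]
  rw [Finset.sum_ite_eq (Finset.range (r+1)) k]
  simp [Nat.lt_succ_iff]

lemma starP_natDegree (r : ℕ) (P : Polynomial ℂ) : (starP r P).natDegree ≤ r := by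
  rw [Polynomial.natDegree_le_iff_coeff_eq_zero]
  intro N hN
  rw [starP_coeff, if_neg (by omega)]

lemma starP_eq_zero (r : ℕ) (P : Polynomial ℂ) (hP : P.natDegree ≤ r)
    (h : starP r P = 0) : P = 0 := by
  ext k
  by_cases hk : k ≤ r
  · have h2 := congrArg (fun Q => Polynomial.coeff Q (r - k)) h
    simp only [starP_coeff, Polynomial.coeff_zero] at h2
    rw [if_pos (Nat.sub_le r k), Nat.sub_sub_self hk] at h2
    have h4 : ((-1 : ℂ))^(r-k) ≠ 0 := pow_ne_zero _ (by norm_num)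
    simpa [h4] using h2
  · have h5 : P.natDegree < k := by omega
    simp [Polynomial.coeff_eq_zero_of_natDegree_lt h5]

lemma starP_map_conj (r : ℕ) (P : Polynomial ℂ) :
    starP r (P.map (starRingEnd ℂ)) = (starP r P).map (starRingEnd ℂ) := by
  ext k
  simp only [starP_coeff, Polynomial.coeff_map]
  split <;> simp

lemma starP_mul_C (r : ℕ) (P : Polynomial ℂ) (c : ℂ) :
    starP r (P * C c) = starP r P * C c := by
  ext k
  simp only [starP_coeff, Polynomial.coeff_mul_C, ite_mul, zero_mul]
  split <;> ring

lemma starP_starP (r : ℕ) (P : Polynomial ℂ) (hP : P.natDegree ≤ r) :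
    starP r (starP r P) = C ((-1:ℂ)^r) * P := by
  ext k
  simp only [starP_coeff, Polynomial.coeff_C_mul]
  by_cases hk : k ≤ r
  · rw [if_pos hk, if_pos (Nat.sub_le r k), Nat.sub_sub_self hk,
      ← mul_assoc, ← pow_add, Nat.add_sub_cancel' hk]
  · rw [if_neg hk,
      Polynomial.coeff_eq_zero_of_natDegree_lt (lt_of_le_of_lt hP (by omega)), mul_zero]

lemma starP_eval (r : ℕ) (P : Polynomial ℂ) (hP : P.natDegree ≤ r) (t : ℂ) (ht : t ≠ 0) :
    (starP r P).eval t = (-t)^r * P.eval (-t⁻¹) := by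
  unfold starP
  rw [Polynomial.eval_finset_sum,
    Polynomial.eval_eq_sum_range' (Nat.lt_succ_of_le hP), Finset.mul_sum]
  conv_rhs => rw [← Finset.sum_range_reflect]
  apply Finset.sum_congr rfl
  intro j hj
  have hjr : j ≤ r := Nat.lt_succ_iff.mp (Finset.mem_range.mp hj)
  simp only [Polynomial.eval_mul, Polynomial.eval_C, Polynomial.eval_pow, Polynomial.eval_X,
    Nat.add_sub_cancel]
  obtain ⟨m, rfl⟩ : ∃ m, r = j + m := ⟨r - j, (Nat.add_sub_cancel' hjr).symm⟩
  have h2 : j + m - j = m := by omega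
  have h1 : ((-t)^m) * ((-t⁻¹))^m = 1 := by
    rw [← mul_pow, neg_mul_neg, mul_inv_cancel₀ ht, one_pow]
  rw [h2, pow_add, show (j + m).succ - 1 - j = m by omega]
  have h3 : (-t)^j * (-t)^m * (P.coeff m * (-t⁻¹)^m)
      = (-t)^j * P.coeff m * ((-t)^m * (-t⁻¹)^m) := by ring
  rw [h3, h1, mul_one, neg_pow]
  ring

lemma moeb_coe_zero (a : ℂ) : moeb 0 a 1 0 ((0 : ℂ) : OnePoint ℂ) = ∞ := by
  show (if 1 * 0 + 0 = 0 then (∞ : OnePoint ℂ) else _) = ∞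
  norm_num

lemma key_pointwise (n r : ℕ) (hn : 2 ≤ n)
    (A B : Polynomial ℂ)
    (hArd : A.natDegree ≤ r) (hBrd : B.natDegree ≤ r)
    (hcomm : ∀ p, moeb 0 (Complex.exp (Real.pi * Complex.I / n)) 1 0
        (sphConj (ratMap (X * A.comp (X ^ n)) (B.comp (X ^ n)) p))
      = ratMap (X * A.comp (X ^ n)) (B.comp (X ^ n))
          (moeb 0 (Complex.exp (Real.pi * Complex.I / n)) 1 0 (sphConj p)))
    (z : ℂ) (hz : z ≠ 0) (hb : B.eval (z ^ n) ≠ 0) :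
    (B.map (starRingEnd ℂ) * starP r B).eval (((starRingEnd ℂ) z) ^ n)
      = (A.map (starRingEnd ℂ) * starP r A).eval (((starRingEnd ℂ) z) ^ n) := by
  have hn0 : (n : ℂ) ≠ 0 := Nat.cast_ne_zero.mpr (by omega)
  set f := starRingEnd ℂ with hf
  set ω : ℂ := Complex.exp (Real.pi * Complex.I / n) with hω
  have hω0 : ω ≠ 0 := Complex.exp_ne_zero _
  have hωn : ω ^ n = -1 := by
    rw [hω, ← Complex.exp_nat_mul,
      show (n : ℂ) * (Real.pi * Complex.I / n) = Real.pi * Complex.I by field_simp]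
    exact Complex.exp_pi_mul_I
  set t := f z with ht
  have hfzero : ∀ x : ℂ, f x = 0 ↔ x = 0 := fun x => map_eq_zero f
  have ht0 : t ≠ 0 := by rw [ht, Ne, hfzero]; exact hz
  have htn0 : t ^ n ≠ 0 := pow_ne_zero _ ht0
  set w : ℂ := ω / t with hw
  have hw0 : w ≠ 0 := div_ne_zero hω0 ht0
  have hwn : w ^ n = -(t ^ n)⁻¹ := by
    rw [hw, div_pow, hωn, neg_div, one_div]
  set a := A.eval (z ^ n) with ha
  set b := B.eval (z ^ n) with hb'
  have hbAev : (A.map f).eval (t ^ n) = f a := by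
    rw [ht, ← map_pow, Polynomial.eval_map, Polynomial.eval₂_at_apply]
  have hbBev : (B.map f).eval (t ^ n) = f b := by
    rw [ht, ← map_pow, Polynomial.eval_map, Polynomial.eval₂_at_apply]
  have hc := hcomm (z : OnePoint ℂ)
  have hPev : ∀ x : ℂ, (X * A.comp (X ^ n)).eval x = x * A.eval (x ^ n) := by
    intro x; simp
  have hQev : ∀ x : ℂ, (B.comp (X ^ n)).eval x = B.eval (x ^ n) := by
    intro x; simp
  rw [ratMap_coe', hQev, hPev, if_neg hb, sphConj_coe', sphConj_coe', ← ht,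
    moeb_coe' _ _ ht0, ratMap_coe', hQev, hPev, ← hw, ← ha, ← hb'] at hc
  rw [Polynomial.eval_mul, Polynomial.eval_mul, hbAev, hbBev,
    starP_eval r A hArd _ htn0, starP_eval r B hBrd _ htn0, ← hwn]
  by_cases hA0 : a = 0
  · rw [hA0] at hc
    norm_num at hc
    rw [moeb_coe_zero] at hc
    have hBw : B.eval (w ^ n) = 0 := by
      by_contra hx
      rw [if_neg hx] at hc
      exact (OnePoint.infty_ne_coe _) hc
    rw [hBw, hA0, map_zero]
    ring
  · have hval : z * a / b ≠ 0 := div_ne_zero (mul_ne_zero hz hA0) hb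
    have hv : f (z * a / b) ≠ 0 := by rw [Ne, hfzero]; exact hval
    rw [moeb_coe' _ _ hv] at hc
    have hBw : B.eval (w ^ n) ≠ 0 := by
      intro hx
      rw [if_pos hx] at hc
      exact (OnePoint.coe_ne_infty _) hc
    rw [if_neg hBw, OnePoint.coe_eq_coe] at hc
    set Aw := A.eval (w ^ n) with hAw
    set Bw := B.eval (w ^ n) with hBw'
    have hfz : f (z * a / b) = t * f a / f b := by rw [map_div₀, map_mul, ht]
    rw [hfz, hw] at hc
    have hfa : f a ≠ 0 := by rw [Ne, hfzero]; exact hA0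
    have hfb : f b ≠ 0 := by rw [Ne, hfzero]; exact hb
    field_simp at hc
    have hkey : f b * Bw = f a * Aw := by
      have hωt : ω * t ≠ 0 := mul_ne_zero hω0 ht0
      exact mul_left_cancel₀ hωt (by linear_combination (ω * t) * hc)
    linear_combination ((-t ^ n) ^ r) * hkey


/-- if `φ(z) = z ψ(z^n)` (`n ≥ 2` even) commutes with
`τ_n(z) = e^{πi/n}/conj z`, then `r = deg ψ` is even and the coefficients of
the denominator of `ψ` satisfy `b_k = conj(λ)(-1)^k conj(a_{r-k})` for some
unimodular `λ`. -/
theorem coefficients_of_tau_n_symmetric_map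
    (n r : ℕ) (hn : 2 ≤ n) (hne : Even n)
    (A B : Polynomial ℂ) (hAB : IsCoprime A B)
    (hr : max A.natDegree B.natDegree = r) (hB : B ≠ 0)
    (hcomm : ∀ p, moeb 0 (Complex.exp (Real.pi * Complex.I / n)) 1 0
        (sphConj (ratMap (X * A.comp (X ^ n)) (B.comp (X ^ n)) p))
      = ratMap (X * A.comp (X ^ n)) (B.comp (X ^ n))
          (moeb 0 (Complex.exp (Real.pi * Complex.I / n)) 1 0 (sphConj p))) :
    Even r ∧ ∃ lam : ℂ, ‖lam‖ = 1 ∧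
      ∀ k ≤ r, B.coeff k
        = (starRingEnd ℂ) lam * (-1) ^ k * (starRingEnd ℂ) (A.coeff (r - k)) := by
  have hArd : A.natDegree ≤ r := hr ▸ le_max_left _ _
  have hBrd : B.natDegree ≤ r := hr ▸ le_max_right _ _
  set f := starRingEnd ℂ with hf
  have hfzero : ∀ x : ℂ, f x = 0 ↔ x = 0 := fun x => map_eq_zero f
  set bA := A.map f with hbA
  set bB := B.map f with hbB
  set sA := starP r A with hsA
  set sB := starP r B with hsB
  have hbB0 : bB ≠ 0 := by
    simp only [hbB, Ne, Polynomial.map_eq_zero_iff (RingHom.injective f)]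
    exact hB
  -- B.comp (X^n) is nonzero
  have hcompB : B.comp (X ^ n : Polynomial ℂ) ≠ 0 := by
    intro h0
    apply hB
    apply Polynomial.funext
    intro u
    obtain ⟨x, hx⟩ := IsAlgClosed.exists_pow_nat_eq u (show 0 < n by omega)
    have h1 := congrArg (Polynomial.eval x) h0
    simp only [Polynomial.eval_comp, Polynomial.eval_pow, Polynomial.eval_X,
      Polynomial.eval_zero, hx] at h1
    simpa using h1
  -- the polynomial identity
  have E : bB * sB = bA * sA := by
    have hFG : (bB * sB).comp (X ^ n) = (bA * sA).comp (X ^ n) := by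
      apply Polynomial.eq_of_infinite_eval_eq
      have hbad : ({0} ∪ (fun x => f x) ⁻¹' {x : ℂ | (B.comp (X ^ n)).IsRoot x}).Finite := by
        apply Set.Finite.union (Set.finite_singleton 0)
        apply Set.Finite.preimage
        · intro x _ y _ hxy
          exact star_injective hxy
        · exact Polynomial.finite_setOf_isRoot hcompB
      apply Set.Infinite.mono _ (Set.Finite.infinite_compl hbad)
      intro t htS
      simp only [Set.mem_compl_iff, Set.mem_union, Set.mem_singleton_iff,
        Set.mem_preimage, Set.mem_setOf_eq, not_or] at htS
      obtain ⟨ht0, htroot⟩ := htS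
      have hroot : B.eval ((f t) ^ n) ≠ 0 := by
        intro hx
        apply htroot
        simp [Polynomial.IsRoot, hx]
      have hzne : f t ≠ 0 := by rw [Ne, hfzero]; exact ht0
      have := key_pointwise n r hn A B hArd hBrd hcomm (f t) hzne hroot
      have hff : f (f t) = t := Complex.conj_conj t
      rw [hff] at this
      simp only [Set.mem_setOf_eq, Polynomial.eval_comp, Polynomial.eval_pow,
        Polynomial.eval_X]
      exact this
    apply Polynomial.funext
    intro u
    obtain ⟨x, hx⟩ := IsAlgClosed.exists_pow_nat_eq u (show 0 < n by omega)
    have h1 := congrArg (Polynomial.eval x) hFG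
    simp only [Polynomial.eval_comp, Polynomial.eval_pow, Polynomial.eval_X, hx] at h1
    exact h1
  -- A ≠ 0
  have hA0 : A ≠ 0 := by
    intro h0
    apply hB
    have : bA = 0 := by rw [hbA, h0, Polynomial.map_zero]
    rw [this, zero_mul] at E
    exact starP_eq_zero r B hBrd (by
      rcases mul_eq_zero.mp E with h | h
      · exact absurd h hbB0
      · exact h)
  have hsA0 : sA ≠ 0 := fun h0 => hA0 (starP_eq_zero r A hArd h0)
  -- coprimality of conjugates
  have hbar : IsCoprime bA bB := by
    have := hAB.map (Polynomial.mapRingHom f)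
    simpa using this
  -- divisibility
  obtain ⟨h, hh⟩ : bB ∣ sA := by
    apply (hbar.symm).dvd_of_dvd_mul_left
    exact ⟨sB, E.symm⟩
  have hh2 : sB = bA * h := by
    apply mul_left_cancel₀ hbB0
    rw [E, hh]; ring
  have hne0 : h ≠ 0 := by
    intro h0
    rw [h0, mul_zero] at hh
    exact hsA0 hh
  -- h is constant
  have hdeg : h.degree ≤ 0 := by
    by_contra hd
    push_neg at hd
    obtain ⟨x, hx⟩ := Complex.exists_root hd
    have hsAx : sA.eval x = 0 := by rw [hh]; simp [hx.eq_zero]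
    have hsBx : sB.eval x = 0 := by rw [hh2]; simp [hx.eq_zero]
    by_cases hx0 : x = 0
    · subst hx0
      rw [← Polynomial.coeff_zero_eq_eval_zero] at hsAx hsBx
      rw [hsA, starP_coeff, if_pos (Nat.zero_le r)] at hsAx
      rw [hsB, starP_coeff, if_pos (Nat.zero_le r)] at hsBx
      simp only [pow_zero, one_mul, Nat.sub_zero] at hsAx hsBx
      rcases max_cases A.natDegree B.natDegree with ⟨hm, _⟩ | ⟨hm, _⟩
      · rw [hm] at hr
        exact Polynomial.leadingCoeff_ne_zero.mpr hA0 (by rwa [Polynomial.leadingCoeff, hr])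
      · rw [hm] at hr
        exact Polynomial.leadingCoeff_ne_zero.mpr hB (by rwa [Polynomial.leadingCoeff, hr])
    · have hxr : (-x : ℂ) ^ r ≠ 0 := pow_ne_zero _ (neg_ne_zero.mpr hx0)
      rw [hsA, starP_eval r A hArd x hx0] at hsAx
      rw [hsB, starP_eval r B hBrd x hx0] at hsBx
      have hAx : A.eval (-x⁻¹) = 0 := by
        rcases mul_eq_zero.mp hsAx with h' | h'
        · exact absurd h' hxr
        · exact h'
      have hBx : B.eval (-x⁻¹) = 0 := by
        rcases mul_eq_zero.mp hsBx with h' | h'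
        · exact absurd h' hxr
        · exact h'
      obtain ⟨u, v, huv⟩ := hAB
      have := congrArg (Polynomial.eval (-x⁻¹)) huv
      simp [hAx, hBx] at this
  obtain ⟨c, rfl⟩ : ∃ c : ℂ, h = C c := ⟨h.coeff 0, Polynomial.eq_C_of_degree_le_zero hdeg⟩
  have hc0 : c ≠ 0 := fun h0 => hne0 (by rw [h0, map_zero])
  have hco1 : ∀ k ≤ r, (-1:ℂ)^k * A.coeff (r-k) = f (B.coeff k) * c := by
    intro k hk
    have hco := congrArg (fun Q => Polynomial.coeff Q k) hh
    simp only [hsA, starP_coeff, if_pos hk, Polynomial.coeff_mul_C, hbB,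
      Polynomial.coeff_map] at hco
    exact hco
  have hco2 : ∀ k ≤ r, (-1:ℂ)^k * B.coeff (r-k) = f (A.coeff k) * c := by
    intro k hk
    have hco := congrArg (fun Q => Polynomial.coeff Q k) hh2
    simp only [hsB, starP_coeff, if_pos hk, Polynomial.coeff_mul_C, hbA,
      Polynomial.coeff_map] at hco
    exact hco
  have hk0 : A.natDegree ≤ r := hArd
  have hak0 : A.coeff A.natDegree ≠ 0 := Polynomial.leadingCoeff_ne_zero.mpr hA0
  have e1 := hco1 (r - A.natDegree) (Nat.sub_le r A.natDegree)
  rw [Nat.sub_sub_self hk0] at e1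
  have e2 := congrArg f (hco2 A.natDegree hk0)
  simp only [map_mul, map_pow, map_neg, map_one] at e2
  rw [show f (f (A.coeff A.natDegree)) = A.coeff A.natDegree from Complex.conj_conj _] at e2
  have hpow : ((-1:ℂ))^(r - A.natDegree) * (-1)^(A.natDegree) = (-1)^r := by
    rw [← pow_add, Nat.sub_add_cancel hk0]
  have e3 : (-1:ℂ)^r * A.coeff A.natDegree
      = (-1:ℂ)^(A.natDegree) * (f (B.coeff (r - A.natDegree)) * c) := by
    rw [← hpow]; linear_combination ((-1:ℂ)^(A.natDegree)) * e1
  have e4 : (-1:ℂ)^r * A.coeff A.natDegree = (f c * c) * A.coeff A.natDegree := by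
    rw [e3]; linear_combination c * e2
  have hcc : (-1 : ℂ) ^ r = f c * c := by
    have e5 : (-1:ℂ)^r * A.coeff A.natDegree = (f c * c) * A.coeff A.natDegree := e4
    exact mul_right_cancel₀ hak0 e5
  have hnsq : (-1 : ℂ) ^ r = (Complex.normSq c : ℂ) := by
    rw [hcc, hf, mul_comm, Complex.mul_conj]
  have hreven : Even r := by
    by_contra hodd
    rw [Nat.not_even_iff_odd] at hodd
    rw [Odd.neg_one_pow hodd] at hnsq
    have : (Complex.normSq c : ℝ) = -1 := by exact_mod_cast hnsq.symm
    linarith [Complex.normSq_nonneg c]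
  have hnsq1 : Complex.normSq c = 1 := by
    rw [Even.neg_one_pow hreven] at hnsq
    exact_mod_cast hnsq.symm
  have habs : ‖c‖ = 1 := by
    have h1 := Complex.sq_norm c
    rw [hnsq1] at h1
    nlinarith [norm_nonneg c]
  refine ⟨hreven, c⁻¹, ?_, ?_⟩
  · rw [norm_inv, habs, inv_one]
  · intro k hk
    have hfb : f (B.coeff k) = (-1) ^ k * A.coeff (r - k) * c⁻¹ := by
      apply mul_right_cancel₀ hc0
      rw [mul_assoc, inv_mul_cancel₀ hc0, mul_one]
      exact (hco1 k hk).symm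
    calc B.coeff k = f (f (B.coeff k)) := (Complex.conj_conj _).symm
      _ = f ((-1) ^ k * A.coeff (r - k) * c⁻¹) := by rw [hfb]
      _ = f c⁻¹ * (-1) ^ k * f (A.coeff (r - k)) := by
          rw [map_mul, map_mul, map_pow, map_neg, map_one]; ring
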